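/- Let p(x) = f'(x)·f(π-x) + f(x)·f'(π-x) for x ∈ (0, π). Then p attains its minimum at x = π/2 and p(x) ≥ p(π/2) = 2·f'(π/2)·f(π/2) > 0 for all x ∈ (0, π). -/

import Mathlib

open Real Set

noncomputable def f (x : ℝ) : ℝ := Real.sin x * (1 - 1 / (8 * Real.sin (x/2)^3))

lemma f_hasDeriv (x : ℝ) (hs : Real.sin (x/2) ≠ 0) :
    HasDerivAt f (Real.cos x * (1 - 1 / (8 * Real.sin (x/2)^3))
      + Real.sin x * (12 * Real.sin (x/2)^2 * Real.cos (x/2) / (8 * Real.sin (x/2)^3)^2)) x := by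
  have h0 : HasDerivAt (fun y : ℝ => y/2) (1/2) x := by
    simpa using (hasDerivAt_id x).div_const 2
  have h1 : HasDerivAt (fun y : ℝ => Real.sin (y/2)) (Real.cos (x/2) * (1/2)) x :=
    by have := (Real.hasDerivAt_sin (x/2)).comp x h0; exact this
  have h2 : HasDerivAt (fun y : ℝ => 8 * Real.sin (y/2)^3)
      (12 * Real.sin (x/2)^2 * Real.cos (x/2)) x := by
    have := (h1.fun_pow 3).const_mul (8:ℝ)
    exact this.congr_deriv (by push_cast; ring)
  have hne : 8 * Real.sin (x/2)^3 ≠ 0 := mul_ne_zero (by norm_num) (pow_ne_zero 3 hs)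
  have h3 : HasDerivAt (fun y : ℝ => 1 - 1 / (8 * Real.sin (y/2)^3))
      (12 * Real.sin (x/2)^2 * Real.cos (x/2) / (8 * Real.sin (x/2)^3)^2) x := by
    have h4 := (hasDerivAt_const x (1:ℝ)).fun_sub (h2.fun_inv hne)
    simpa [one_div, neg_div] using h4
  exact (Real.hasDerivAt_sin x).mul h3

lemma f_deriv (x : ℝ) (hs : Real.sin (x/2) ≠ 0) :
    deriv f x = Real.cos x + (2 - Real.sin (x/2)^2) / (8 * Real.sin (x/2)^3) := by
  rw [(f_hasDeriv x hs).deriv]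
  have hsin : Real.sin x = 2 * Real.sin (x/2) * Real.cos (x/2) := by
    rw [show x = 2*(x/2) by ring, Real.sin_two_mul]; ring
  have hcos : Real.cos x = 2 * Real.cos (x/2)^2 - 1 := by
    rw [show x = 2*(x/2) by ring, Real.cos_two_mul]; ring_nf
  have hpy : Real.sin (x/2)^2 + Real.cos (x/2)^2 = 1 := Real.sin_sq_add_cos_sq _
  rw [hsin, hcos]
  field_simp
  linear_combination 8 * hpy

lemma key (s c : ℝ) (hs : 0 < s) (hc : 0 < c) (hpy : s^2 + c^2 = 1) :
    (8*Real.sqrt 2 - 4) * (s^2*c^2) ≤ 8*s^5 + 8*c^5 - 1 := by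
  set r := Real.sqrt 2 with hrdef
  have hr2 : r^2 = 2 := Real.sq_sqrt (by norm_num)
  have hr0 : 0 ≤ r := Real.sqrt_nonneg 2
  have hr1 : 1 < r := by nlinarith
  have hrlt : r < 2 := by nlinarith
  have hu1 : 1 ≤ s + c := by nlinarith [mul_pos hs hc]
  have hur : s + c ≤ r := by nlinarith [sq_nonneg (s - c)]
  have hQ : 0 ≤ 2*(s+c)^4 + (4*r-1)*(s+c)^3 + (8-r)*(s+c)^2 + 4*r*(s+c) - 2 := by
    nlinarith [pow_le_pow_left₀ (by norm_num : (0:ℝ) ≤ 1) hu1 4,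
      pow_le_pow_left₀ (by norm_num : (0:ℝ) ≤ 1) hu1 3,
      pow_le_pow_left₀ (by norm_num : (0:ℝ) ≤ 1) hu1 2]
  have hfact : 8*s^5 + 8*c^5 - 1 - (8*r - 4) * (s^2*c^2)
      = (r - (s+c)) * (2*(s+c)^4 + (4*r-1)*(s+c)^3 + (8-r)*(s+c)^2 + 4*r*(s+c) - 2) := by
    linear_combination (10*s^3 + 10*s^2*c + 2*s^2*r - s^2 + 10*s*c^2 + 8*s*c*r - 4*s*c - 4*s*r^2 + 18*s
      + 10*c^3 + 2*c^2*r - c^2 - 12*c*r^2 + 34*c + r^2 - 2*r - 1) * hpy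
      + (-8*s*c^2 + 2*s*c - 8*s + 8*c^3 - 16*c + 1) * hr2
  nlinarith [mul_nonneg (sub_nonneg.mpr hur) hQ]

theorem stmt12 :
    let p : ℝ → ℝ := fun x => deriv f x * f (π - x) + f x * deriv f (π - x)
    (∀ x ∈ Ioo (0:ℝ) π, p x ≥ p (π/2)) ∧
    p (π/2) = 2 * deriv f (π/2) * f (π/2) ∧
    p (π/2) > 0 := by
  intro p
  set r := Real.sqrt 2 with hrdef
  have hr2 : r^2 = 2 := Real.sq_sqrt (by norm_num)
  have hr0 : 0 ≤ r := Real.sqrt_nonneg 2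
  have hr1 : 1 < r := by nlinarith
  have hrlt : r < 2 := by nlinarith
  have hsym : p (π/2) = 2 * deriv f (π/2) * f (π/2) := by
    show deriv f (π/2) * f (π - π/2) + f (π/2) * deriv f (π - π/2) = _
    rw [show π - π/2 = π/2 by ring]; ring
  have hs4 : Real.sin (π/2/2) = r/2 := by
    rw [show π/2/2 = π/4 by ring, Real.sin_pi_div_four]
  have hc4 : Real.cos (π/2/2) = r/2 := by
    rw [show π/2/2 = π/4 by ring, Real.cos_pi_div_four]
  have hsne : Real.sin (π/2/2) ≠ 0 := by rw [hs4]; positivity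
  have hd2 : deriv f (π/2) = 3*r/8 := by
    rw [f_deriv _ hsne, hs4, Real.cos_pi_div_two, zero_add,
      div_eq_iff (by positivity : (8:ℝ)*(r/2)^3 ≠ 0)]
    linear_combination (-3*r^2/8 - 1) * hr2
  have hf2 : f (π/2) = 1 - r/4 := by
    have hrne : r ≠ 0 := by positivity
    rw [f, hs4, Real.sin_pi_div_two]
    field_simp
    linear_combination (8*r^2 + 16) * hr2
  have hppos : p (π/2) > 0 := by
    rw [hsym, hd2, hf2]; nlinarith
  have hpval : p (π/2) = 3*(2*r - 1)/8 := by
    rw [hsym, hd2, hf2]; linear_combination (-3/16)*hr2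
  refine ⟨?_, hsym, hppos⟩
  intro x hx
  obtain ⟨hx0, hxpi⟩ := hx
  have hpipos := Real.pi_pos
  set s := Real.sin (x/2) with hsdef
  set c := Real.cos (x/2) with hcdef
  have hs : 0 < s := Real.sin_pos_of_pos_of_lt_pi (by linarith) (by linarith)
  have hc : 0 < c := Real.cos_pos_of_mem_Ioo ⟨by linarith, by linarith⟩
  have hpy : s^2 + c^2 = 1 := Real.sin_sq_add_cos_sq _
  have hsinx : Real.sin x = 2*s*c := by
    rw [hsdef, hcdef, show x = 2*(x/2) by ring, Real.sin_two_mul]; ring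
  have hcosx : Real.cos x = 2*c^2 - 1 := by
    have h := Real.cos_two_mul (x/2)
    rw [show 2*(x/2) = x by ring] at h
    rw [h, hcdef]
  have hhalf : (π - x)/2 = π/2 - x/2 := by ring
  have hspix : Real.sin ((π - x)/2) = c := by
    rw [hhalf, Real.sin_pi_div_two_sub]
  have hcpix : Real.cos ((π - x)/2) = s := by
    rw [hhalf, Real.cos_pi_div_two_sub]
  have hval : p x = 3*(8*s^5 + 8*c^5 - 1)/(32*(s^2*c^2)) := by
    show deriv f x * f (π - x) + f x * deriv f (π - x) = _
    rw [f_deriv x hs.ne', f_deriv (π - x) (by rw [hspix]; exact hc.ne'), hspix]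
    rw [f, f, hspix, Real.sin_pi_sub, Real.cos_pi_sub]
    rw [hsinx, hcosx]
    have hs' : Real.sin (x/2) ≠ 0 := hs.ne'
    field_simp
    linear_combination (64*s^3*(1 - 8*c^3 - 24*s^3)) * hpy
  rw [hval, hpval, ge_iff_le, div_le_div_iff₀ (by norm_num) (by positivity)]
  nlinarith [key s c hs hc hpy]
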